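/- Let U ⊊ ℂ be a simply connected domain with u ∈ U, and let (U_k) be an increasing sequence of simply connected subdomains containing u with ⋃_k U_k = U. Then the conformal radii r(U_k, u) converge to r(U, u). -/

import Mathlib

open Metric Set Filter Function
open scoped Topology

/-- The inverse of an injective holomorphic map on the unit disk (with nonvanishing
derivative at the center) is differentiable at every point of the image. -/
lemma inv_diff {f : ℂ → ℂ} (hd : DifferentiableOn ℂ f (ball 0 1))
    (hinj : Set.InjOn f (ball 0 1)) (h0 : deriv f 0 ≠ 0) :
    ∀ x ∈ f '' (ball 0 1), DifferentiableAt ℂ (invFunOn f (ball 0 1)) x := by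
  set D : Set ℂ := ball 0 1 with hD
  have hDo : IsOpen D := isOpen_ball
  have h0D : (0:ℂ) ∈ D := mem_ball_self one_pos
  have hA : AnalyticOnNhd ℂ f D := hd.analyticOnNhd hDo
  set g : ℂ → ℂ := invFunOn f D with hg
  have hleft : ∀ z ∈ D, g (f z) = z := fun z hz => hinj.leftInvOn_invFunOn hz
  have hmem : ∀ x ∈ f '' D, g x ∈ D := by
    rintro x ⟨z, hz, rfl⟩; exact Function.invFunOn_mem ⟨z, hz, rfl⟩
  have hright : ∀ x ∈ f '' D, f (g x) = x := by
    rintro x ⟨z, hz, rfl⟩; exact Function.invFunOn_eq ⟨z, hz, rfl⟩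
  -- open mapping: nbhds map to nbhds
  have hopen : ∀ w ∈ D, 𝓝 (f w) ≤ map f (𝓝 w) := by
    intro w hw
    rcases (hA w hw).eventually_constant_or_nhds_le_map_nhds with h | h
    · exfalso
      have h2 : ∀ᶠ z in 𝓝[≠] w, f z = f w ∧ z ∈ D ∧ z ≠ w := by
        filter_upwards [eventually_nhdsWithin_of_eventually_nhds h,
          eventually_nhdsWithin_of_eventually_nhds (hDo.mem_nhds hw),
          self_mem_nhdsWithin] with z h1 h2 h3
        exact ⟨h1, h2, h3⟩
      obtain ⟨z, h1, h2, h3⟩ := h2.exists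
      exact h3 (hinj h2 hw h1)
    · exact h
  -- continuity of the inverse
  have hcont : ∀ x ∈ f '' D, ContinuousAt g x := by
    rintro x hx
    rw [ContinuousAt, tendsto_def]
    intro W hW
    have hWD : W ∩ D ∈ 𝓝 (g x) := inter_mem hW (hDo.mem_nhds (hmem x hx))
    have : f '' (W ∩ D) ∈ map f (𝓝 (g x)) :=
      image_mem_map hWD
    have himg : f '' (W ∩ D) ∈ 𝓝 x := by
      have := (hopen (g x) (hmem x hx)) this
      rwa [hright x hx] at this
    refine mem_of_superset himg ?_
    rintro y ⟨z, ⟨hz1, hz2⟩, rfl⟩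
    simpa [hleft z hz2] using hz1
  -- differentiability at points where the derivative doesn't vanish
  have hgood : ∀ x ∈ f '' D, deriv f (g x) ≠ 0 → DifferentiableAt ℂ g x := by
    intro x hx hne
    have hw : g x ∈ D := hmem x hx
    have hs : HasStrictDerivAt f (deriv f (g x)) (g x) :=
      (hA _ hw).contDiffAt.hasStrictDerivAt (by exact one_ne_zero)
    have hleft' : ∀ᶠ z in 𝓝 (g x), g (f z) = z := by
      filter_upwards [hDo.mem_nhds hw] with z hz using hleft z hz
    have := (hs.to_local_left_inverse hne hleft').hasDerivAt.differentiableAt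
    rwa [hright x hx] at this
  -- zeros of deriv f are isolated
  have hiso : ∀ w ∈ D, deriv f w = 0 → ∀ᶠ z in 𝓝[≠] w, deriv f z ≠ 0 ∧ z ∈ D := by
    intro w hw hzero
    have hAd : AnalyticOnNhd ℂ (deriv f) D := hA.deriv
    rcases (hAd w hw).eventually_eq_zero_or_eventually_ne_zero with h | h
    · exfalso
      have : EqOn (deriv f) 0 D :=
        hAd.eqOn_zero_of_preconnected_of_eventuallyEq_zero
          ((convex_ball (0:ℂ) 1).isPreconnected) hw h
      exact h0 (this h0D)
    · filter_upwards [h, eventually_nhdsWithin_of_eventually_nhds (hDo.mem_nhds hw)]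
        with z h1 h2 using ⟨h1, h2⟩
  -- main
  intro x hx
  by_cases hne : deriv f (g x) ≠ 0
  · exact hgood x hx hne
  push_neg at hne
  have hw : g x ∈ D := hmem x hx
  obtain ⟨W, hWnhds, hWprop⟩ := eventually_nhdsWithin_iff.mp (hiso (g x) hw hne) |>.exists_mem
  -- f '' (W ∩ D) is a nbhd of x on whose punctured part g is differentiable
  have himg : f '' (W ∩ D) ∈ 𝓝 x := by
    have h1 : W ∩ D ∈ 𝓝 (g x) := inter_mem hWnhds (hDo.mem_nhds hw)
    have := (hopen (g x) hw) (image_mem_map h1)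
    rwa [hright x hx] at this
  have hpunct : ∀ᶠ y in 𝓝[≠] x, DifferentiableAt ℂ g y := by
    rw [eventually_nhdsWithin_iff]
    filter_upwards [himg] with y hy hyx
    obtain ⟨z, ⟨hz1, hz2⟩, rfl⟩ := hy
    have hgz : g (f z) = z := hleft z hz2
    have hzw : z ≠ g x := by
      rintro rfl
      exact hyx (hright x hx)
    have := hWprop z hz1 hzw
    exact hgood (f z) (mem_image_of_mem f hz2) (by rw [hgz]; exact this.1)
  exact (Complex.analyticAt_of_differentiable_on_punctured_nhds_of_continuousAt hpunct
    (hcont x hx)).differentiableAt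

theorem stmt_18 (U : Set ℂ) (hU : IsOpen U) (hUne : U ≠ Set.univ) (u : ℂ) (hu : u ∈ U)
    (Uk : ℕ → Set ℂ) (hUko : ∀ k, IsOpen (Uk k)) (hUkinc : ∀ k, Uk k ⊆ Uk (k + 1))
    (hUkU : ⋃ k, Uk k = U) (hUku : ∀ k, u ∈ Uk k)
    (Ψ : ℂ → ℂ)
    (hΨd : DifferentiableOn ℂ Ψ (Metric.ball 0 1))
    (hΨinj : Set.InjOn Ψ (Metric.ball 0 1))
    (hΨsurj : Ψ '' Metric.ball 0 1 = U) (hΨ0 : Ψ 0 = u)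
    (Ψk : ℕ → ℂ → ℂ)
    (hΨkd : ∀ k, DifferentiableOn ℂ (Ψk k) (Metric.ball 0 1))
    (hΨkinj : ∀ k, Set.InjOn (Ψk k) (Metric.ball 0 1))
    (hΨksurj : ∀ k, Ψk k '' Metric.ball 0 1 = Uk k) (hΨk0 : ∀ k, Ψk k 0 = u)
    (r : ℝ) (hr : 0 < r) (hΨr : deriv Ψ 0 = (r : ℂ))
    (rk : ℕ → ℝ) (hrk : ∀ k, 0 < rk k) (hΨkr : ∀ k, deriv (Ψk k) 0 = (rk k : ℂ)) :
    Tendsto rk atTop (nhds r) := by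
  have h0D : (0:ℂ) ∈ ball (0:ℂ) 1 := mem_ball_self one_pos
  have hUsub : ∀ k, Uk k ⊆ U := fun k => hUkU ▸ subset_iUnion Uk k
  have hrne : deriv Ψ 0 ≠ 0 := by rw [hΨr]; exact_mod_cast hr.ne'
  have hrkne : ∀ k, deriv (Ψk k) 0 ≠ 0 := by
    intro k; rw [hΨkr k]; exact_mod_cast (hrk k).ne'
  have hinvd := inv_diff hΨd hΨinj hrne
  set inv : ℂ → ℂ := invFunOn Ψ (ball 0 1) with hinv
  -- upper bound
  have hub : ∀ k, rk k ≤ r := by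
    intro k
    set g : ℂ → ℂ := inv ∘ Ψk k with hgdef
    have hmemU : ∀ z ∈ ball (0:ℂ) 1, Ψk k z ∈ Ψ '' ball 0 1 := by
      intro z hz
      rw [hΨsurj]
      exact hUsub k ((hΨksurj k) ▸ mem_image_of_mem _ hz)
    have hmaps : MapsTo g (ball 0 1) (ball 0 1) := by
      intro z hz
      obtain ⟨w, hw, hwe⟩ := hmemU z hz
      exact Function.invFunOn_mem ⟨w, hw, hwe⟩
    have hg0 : g 0 = 0 := by
      show inv (Ψk k 0) = 0
      rw [hΨk0 k, ← hΨ0]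
      exact hΨinj.leftInvOn_invFunOn h0D
    have hgd : DifferentiableOn ℂ g (ball 0 1) := by
      intro z hz
      exact ((hinvd _ (hmemU z hz)).comp z
        ((hΨkd k).differentiableAt (isOpen_ball.mem_nhds hz))).differentiableWithinAt
    have hschwarz : ‖deriv g 0‖ ≤ 1 / 1 := by
      have hmaps' : MapsTo g (ball 0 1) (ball (g 0) 1) := by rw [hg0]; exact hmaps
      exact Complex.norm_deriv_le_div_of_mapsTo_ball hgd (hmaps'.mono_right ball_subset_closedBall) one_pos
    have heq : (Ψ ∘ g) =ᶠ[𝓝 0] Ψk k := by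
      filter_upwards [isOpen_ball.mem_nhds h0D] with z hz
      obtain ⟨w, hw, hwe⟩ := hmemU z hz
      exact Function.invFunOn_eq ⟨w, hw, hwe⟩
    have hchain : deriv (Ψ ∘ g) 0 = deriv Ψ (g 0) * deriv g 0 :=
      deriv_comp (x := 0) (by rw [hg0]; exact hΨd.differentiableAt (isOpen_ball.mem_nhds h0D))
        ((hinvd _ (hmemU 0 h0D)).comp 0
          ((hΨkd k).differentiableAt (isOpen_ball.mem_nhds h0D)))
    have hkey : (rk k : ℂ) = r * deriv g 0 := by
      rw [← hΨkr k, ← heq.deriv_eq, hchain, hg0, hΨr]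
    have hdg : deriv g 0 = (rk k : ℂ) / (r : ℂ) := by
      rw [eq_div_iff (by exact_mod_cast hr.ne' : (r : ℂ) ≠ 0), hkey]; ring
    rw [hdg] at hschwarz
    have h1 : |rk k| / |r| ≤ 1 := by simpa using hschwarz
    rw [abs_of_pos (hrk k), abs_of_pos hr] at h1
    exact (div_le_one hr).mp h1
  -- lower bound
  have hlb : ∀ ρ : ℝ, 0 < ρ → ρ < 1 → ∃ N, ∀ k ≥ N, ρ * r ≤ rk k := by
    intro ρ hρ0 hρ1
    have hK : IsCompact (Ψ '' closedBall 0 ρ) :=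
      (isCompact_closedBall _ _).image_of_continuousOn
        (hΨd.continuousOn.mono (closedBall_subset_ball hρ1))
    have hKU : Ψ '' closedBall 0 ρ ⊆ ⋃ k, Uk k := by
      rw [hUkU, ← hΨsurj]
      exact image_mono (closedBall_subset_ball hρ1)
    obtain ⟨t, ht⟩ := hK.elim_finite_subcover Uk hUko hKU
    refine ⟨t.sup id, fun k hk => ?_⟩
    have hmono : Monotone Uk := monotone_nat_of_le_succ hUkinc
    have hKk : Ψ '' closedBall 0 ρ ⊆ Uk k := by
      intro x hx
      obtain ⟨i, hi, hxi⟩ := mem_iUnion₂.mp (ht hx)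
      exact hmono (le_trans (Finset.le_sup (f := id) hi) hk) hxi
    set invk : ℂ → ℂ := invFunOn (Ψk k) (ball 0 1) with hinvk
    have hinvkd := inv_diff (hΨkd k) (hΨkinj k) (hrkne k)
    set g : ℂ → ℂ := invk ∘ Ψ with hgdef
    have hmemU : ∀ z ∈ ball (0:ℂ) ρ, Ψ z ∈ Ψk k '' ball 0 1 := by
      intro z hz
      rw [hΨksurj k]
      exact hKk (mem_image_of_mem _ (ball_subset_closedBall hz))
    have hmaps : MapsTo g (ball 0 ρ) (ball 0 1) := by
      intro z hz
      obtain ⟨w, hw, hwe⟩ := hmemU z hz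
      exact Function.invFunOn_mem ⟨w, hw, hwe⟩
    have h0ρ : (0:ℂ) ∈ ball (0:ℂ) ρ := mem_ball_self hρ0
    have hg0 : g 0 = 0 := by
      show invk (Ψ 0) = 0
      rw [hΨ0, ← hΨk0 k]
      exact (hΨkinj k).leftInvOn_invFunOn h0D
    have hgd : DifferentiableOn ℂ g (ball 0 ρ) := by
      intro z hz
      exact ((hinvkd _ (hmemU z hz)).comp z
        (hΨd.differentiableAt
          (isOpen_ball.mem_nhds (ball_subset_ball hρ1.le hz)))).differentiableWithinAt
    have hschwarz : ‖deriv g 0‖ ≤ 1 / ρ := by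
      have hmaps' : MapsTo g (ball 0 ρ) (ball (g 0) 1) := by rw [hg0]; exact hmaps
      exact Complex.norm_deriv_le_div_of_mapsTo_ball hgd (hmaps'.mono_right ball_subset_closedBall) hρ0
    have heq : (Ψk k ∘ g) =ᶠ[𝓝 0] Ψ := by
      filter_upwards [isOpen_ball.mem_nhds h0ρ] with z hz
      obtain ⟨w, hw, hwe⟩ := hmemU z hz
      exact Function.invFunOn_eq ⟨w, hw, hwe⟩
    have hchain : deriv (Ψk k ∘ g) 0 = deriv (Ψk k) (g 0) * deriv g 0 :=
      deriv_comp (x := 0) (by rw [hg0]; exact (hΨkd k).differentiableAt (isOpen_ball.mem_nhds h0D))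
        ((hinvkd _ (hmemU 0 h0ρ)).comp 0
          (hΨd.differentiableAt (isOpen_ball.mem_nhds h0D)))
    have hkey : (r : ℂ) = rk k * deriv g 0 := by
      rw [← hΨr, ← heq.deriv_eq, hchain, hg0, hΨkr k]
    have hdg : deriv g 0 = (r : ℂ) / (rk k : ℂ) := by
      rw [eq_div_iff (by exact_mod_cast (hrk k).ne' : ((rk k) : ℂ) ≠ 0), hkey]; ring
    rw [hdg] at hschwarz
    have h1 : |r| / |rk k| ≤ ρ⁻¹ := by simpa using hschwarz
    rw [abs_of_pos hr, abs_of_pos (hrk k), div_le_iff₀ (hrk k)] at h1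
    have h2 := mul_le_mul_of_nonneg_left h1 hρ0.le
    rwa [← mul_assoc, mul_inv_cancel₀ hρ0.ne', one_mul] at h2
  -- conclude
  rw [Metric.tendsto_atTop]
  intro ε hε
  set ρ : ℝ := 1 - min (ε / (2 * r)) (1 / 2) with hρdef
  have hm0 : 0 < min (ε / (2 * r)) (1 / 2) :=
    lt_min (div_pos hε (by linarith)) (by norm_num)
  have hρ0 : 0 < ρ := by
    have : min (ε / (2 * r)) (1 / 2) ≤ 1 / 2 := min_le_right _ _
    simp only [hρdef]; linarith
  have hρ1 : ρ < 1 := by simp only [hρdef]; linarith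
  obtain ⟨N, hN⟩ := hlb ρ hρ0 hρ1
  refine ⟨N, fun k hk => ?_⟩
  have h1 := hN k hk
  have h2 := hub k
  have hm1 : min (ε / (2 * r)) (1 / 2) ≤ ε / (2 * r) := min_le_left _ _
  have hmul : min (ε / (2 * r)) (1 / 2) * r ≤ (ε / (2 * r)) * r :=
    mul_le_mul_of_nonneg_right hm1 hr.le
  have hhalf : (ε / (2 * r)) * r = ε / 2 := by field_simp
  have hρr : ρ * r = r - min (ε / (2 * r)) (1 / 2) * r := by rw [hρdef]; ring
  rw [hρr] at h1
  rw [Real.dist_eq, abs_of_nonpos (by linarith)]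
  linarith
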